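/- The equilateral Lagrange configuration of the Lennard-Jones 3-body problem: Let q₀₄ = (1/√3)·((1,0), (cos(2π/3), sin(2π/3)), (cos(4π/3), sin(4π/3))) ∈ Ω. Then ∇U(q₀₄) = 0, U(q₀₄) = −3, and the Hessian ∇²U(q₀₄), regarded as a symmetric 6×6 real matrix, has spectrum σ(∇²U(q₀₄)) = {0, 108, 216} with multiplicities mult(0) = 3, mult(108) = 2 and mult(216) = 1. -/

import Mathlib

open Real Polynomial

/-- Configuration space of three point particles in the plane. -/
noncomputable abbrev LJConf3 := PiLp 2 fun _ : Fin 3 => EuclideanSpace ℝ (Fin 2)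

/-- The Lennard-Jones three-body potential
`U(q) = Σ_{1 ≤ i < j ≤ 3} (‖q_i − q_j‖⁻¹² − 2‖q_i − q_j‖⁻⁶)`. -/
noncomputable def lj3 (q : LJConf3) : ℝ :=
  (‖q 0 - q 1‖ ^ (-12 : ℤ) - 2 * ‖q 0 - q 1‖ ^ (-6 : ℤ)) +
  (‖q 0 - q 2‖ ^ (-12 : ℤ) - 2 * ‖q 0 - q 2‖ ^ (-6 : ℤ)) +
  (‖q 1 - q 2‖ ^ (-12 : ℤ) - 2 * ‖q 1 - q 2‖ ^ (-6 : ℤ))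

/-- The equilateral Lagrange configuration
`q₀₄ = (1/√3)·((1,0), (cos(2π/3), sin(2π/3)), (cos(4π/3), sin(4π/3)))`. -/
noncomputable def ljq₀₄ : LJConf3 :=
  WithLp.toLp 2 ![!₂[1 / Real.sqrt 3, 0],
    !₂[(1 / Real.sqrt 3) * Real.cos (2 * π / 3), (1 / Real.sqrt 3) * Real.sin (2 * π / 3)],
    !₂[(1 / Real.sqrt 3) * Real.cos (4 * π / 3), (1 / Real.sqrt 3) * Real.sin (4 * π / 3)]]

/-- The Hessian `∇²U(q₀₄)` of the Lennard-Jones 3-body potential at `q₀₄`, as an endomorphism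
of the (6-dimensional) configuration space. -/
noncomputable def ljHess3 : LJConf3 →ₗ[ℝ] LJConf3 := (fderiv ℝ (gradient lj3) ljq₀₄ : _)

/-! ### Auxiliary definitions and lemmas -/

open scoped RealInnerProductSpace

local notation "E2" => EuclideanSpace ℝ (Fin 2)

noncomputable def ljc (s : ℝ) : ℝ := 12 * s ^ (-4 : ℤ) - 12 * s ^ (-7 : ℤ)
noncomputable def ljc' (s : ℝ) : ℝ := -48 * s ^ (-5 : ℤ) + 84 * s ^ (-8 : ℤ)
noncomputable def ljw (v : E2) : E2 := ljc ⟪v, v⟫ • v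

lemma ljc_one : ljc 1 = 0 := by norm_num [ljc]
lemma ljc'_one : ljc' 1 = 36 := by norm_num [ljc']

lemma hasDerivAt_ljp (s : ℝ) (hs : s ≠ 0) :
    HasDerivAt (fun s : ℝ => s ^ (-6 : ℤ) - 2 * s ^ (-3 : ℤ)) (ljc s / 2) s := by
  have h1 := hasDerivAt_zpow (-6) s (Or.inl hs)
  have h2 := ((hasDerivAt_zpow (-3) s (Or.inl hs)).const_mul (2 : ℝ))
  refine (h1.sub h2).congr_deriv ?_
  simp [ljc]
  ring

lemma hasDerivAt_ljc (s : ℝ) (hs : s ≠ 0) : HasDerivAt ljc (ljc' s) s := by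
  have h1 := (hasDerivAt_zpow (-4) s (Or.inl hs)).const_mul (12 : ℝ)
  have h2 := (hasDerivAt_zpow (-7) s (Or.inl hs)).const_mul (12 : ℝ)
  have h := h1.sub h2
  have he : ljc = fun s : ℝ => 12 * s ^ (-4 : ℤ) - 12 * s ^ (-7 : ℤ) := rfl
  rw [he]
  refine h.congr_deriv ?_
  simp [ljc']
  ring

lemma pair_eq (u : E2) :
    ‖u‖ ^ (-12 : ℤ) - 2 * ‖u‖ ^ (-6 : ℤ)
      = (fun s : ℝ => s ^ (-6 : ℤ) - 2 * s ^ (-3 : ℤ)) ⟪u, u⟫ := by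
  have h : ⟪u, u⟫ = ‖u‖ ^ (2 : ℤ) := by
    rw [real_inner_self_eq_norm_sq]; norm_cast
  simp only [h, ← zpow_mul]
  norm_num

lemma hasFDerivAt_nsq (v : E2) :
    HasFDerivAt (fun u : E2 => ⟪u, u⟫) (2 • (innerSL ℝ v)) v := by
  have h := (hasStrictFDerivAt_norm_sq v).hasFDerivAt
  have he : (fun u : E2 => ⟪u, u⟫) = fun u : E2 => ‖u‖ ^ 2 := by
    funext u; exact real_inner_self_eq_norm_sq u
  rw [he]; exact h

lemma inner_self_ne (v : E2) (hv : v ≠ 0) : ⟪v, v⟫ ≠ 0 :=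
  inner_self_ne_zero.mpr hv

lemma hasFDerivAt_pair (v : E2) (hv : v ≠ 0) :
    HasFDerivAt (fun u : E2 => ‖u‖ ^ (-12 : ℤ) - 2 * ‖u‖ ^ (-6 : ℤ))
      ((InnerProductSpace.toDual ℝ E2) (ljw v)) v := by
  have h := (hasDerivAt_ljp ⟪v, v⟫ (inner_self_ne v hv)).comp_hasFDerivAt
    (f := fun u : E2 => ⟪u, u⟫) v (hasFDerivAt_nsq v)
  have he : (fun u : E2 => ‖u‖ ^ (-12 : ℤ) - 2 * ‖u‖ ^ (-6 : ℤ))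
      = (fun s : ℝ => s ^ (-6 : ℤ) - 2 * s ^ (-3 : ℤ)) ∘ (fun u : E2 => ⟪u, u⟫) := by
    funext u; exact pair_eq u
  rw [he]
  refine h.congr_fderiv ?_
  ext h'
  simp [ljw, InnerProductSpace.toDual_apply_apply, inner_smul_left, real_inner_comm v h']
  ring

lemma hasGradientAt_pair (v : E2) (hv : v ≠ 0) :
    HasGradientAt (fun u : E2 => ‖u‖ ^ (-12 : ℤ) - 2 * ‖u‖ ^ (-6 : ℤ)) (ljw v) v :=
  hasGradientAt_iff_hasFDerivAt.mpr (hasFDerivAt_pair v hv)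

noncomputable def ljDw (v : E2) : E2 →L[ℝ] E2 :=
  ljc ⟪v, v⟫ • ContinuousLinearMap.id ℝ E2
    + ((2 * ljc' ⟪v, v⟫) • innerSL ℝ v).smulRight v

lemma hasFDerivAt_ljw (v : E2) (hv : v ≠ 0) : HasFDerivAt ljw (ljDw v) v := by
  have hc : HasFDerivAt (fun u : E2 => ljc ⟪u, u⟫) ((2 * ljc' ⟪v, v⟫) • innerSL ℝ v) v := by
    have h := (hasDerivAt_ljc ⟪v, v⟫ (inner_self_ne v hv)).comp_hasFDerivAt
      (f := fun u : E2 => ⟪u, u⟫) v (hasFDerivAt_nsq v)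
    refine h.congr_fderiv ?_
    ext h'
    simp
    ring
  have h := hc.smul (hasFDerivAt_id v)
  have he : ljw = fun u : E2 => ljc ⟪u, u⟫ • u := rfl
  rw [he]
  exact h

noncomputable def ljL (i j : Fin 3) : LJConf3 →L[ℝ] E2 :=
  PiLp.proj (𝕜 := ℝ) 2 (fun _ : Fin 3 => E2) i - PiLp.proj (𝕜 := ℝ) 2 (fun _ : Fin 3 => E2) j

lemma hasFDerivAt_sub_comp (i j : Fin 3) (q : LJConf3) :
    HasFDerivAt (fun q : LJConf3 => q i - q j) (ljL i j) q := by
  unfold ljL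
  exact (PiLp.hasFDerivAt_apply (𝕜 := ℝ) 2 q i).sub (PiLp.hasFDerivAt_apply (𝕜 := ℝ) 2 q j)

noncomputable def ljG (q : LJConf3) : LJConf3 :=
  WithLp.toLp 2 ![ljw (q 0 - q 1) + ljw (q 0 - q 2),
    ljw (q 1 - q 0) + ljw (q 1 - q 2),
    ljw (q 2 - q 0) + ljw (q 2 - q 1)]

lemma ljw_neg (v : E2) : ljw (-v) = - ljw v := by
  simp [ljw, inner_neg_neg]

lemma ljns (q : LJConf3) (i j : Fin 3) : q j - q i = -(q i - q j) := by abel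

lemma hasGradientAt_lj3 (q : LJConf3) (h01 : q 0 ≠ q 1) (h02 : q 0 ≠ q 2) (h12 : q 1 ≠ q 2) :
    HasGradientAt lj3 (ljG q) q := by
  rw [hasGradientAt_iff_hasFDerivAt]
  have H01 := ((hasGradientAt_pair (q 0 - q 1) (sub_ne_zero.mpr h01)).hasFDerivAt).comp q
    (hasFDerivAt_sub_comp 0 1 q)
  have H02 := ((hasGradientAt_pair (q 0 - q 2) (sub_ne_zero.mpr h02)).hasFDerivAt).comp q
    (hasFDerivAt_sub_comp 0 2 q)
  have H12 := ((hasGradientAt_pair (q 1 - q 2) (sub_ne_zero.mpr h12)).hasFDerivAt).comp q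
    (hasFDerivAt_sub_comp 1 2 q)
  have H := (H01.add H02).add H12
  have he : lj3 = (fun q : LJConf3 =>
      ((fun u : E2 => ‖u‖ ^ (-12 : ℤ) - 2 * ‖u‖ ^ (-6 : ℤ)) ((fun q : LJConf3 => q 0 - q 1) q) +
       (fun u : E2 => ‖u‖ ^ (-12 : ℤ) - 2 * ‖u‖ ^ (-6 : ℤ)) ((fun q : LJConf3 => q 0 - q 2) q)) +
       (fun u : E2 => ‖u‖ ^ (-12 : ℤ) - 2 * ‖u‖ ^ (-6 : ℤ)) ((fun q : LJConf3 => q 1 - q 2) q)) := by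
    funext q; simp [lj3]
  rw [he]
  refine H.congr_fderiv ?_
  ext h
  simp only [ljG, ljns q 1 0, ljns q 2 0, ljns q 2 1, ljw_neg]
  simp only [InnerProductSpace.toDual_apply_apply, ContinuousLinearMap.add_apply,
    ContinuousLinearMap.coe_comp', Function.comp_apply, ljL, ContinuousLinearMap.coe_sub',
    Pi.sub_apply, PiLp.proj_apply, PiLp.inner_apply, Fin.sum_univ_three, Fin.sum_univ_two,
    Matrix.cons_val_zero, Matrix.cons_val_one, Matrix.head_cons, Matrix.cons_val_two,
    Matrix.tail_cons, PiLp.add_apply, PiLp.neg_apply, PiLp.sub_apply,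
    RCLike.inner_apply, conj_trivial]
  ring

lemma sqrt3_sq : Real.sqrt 3 * Real.sqrt 3 = 3 := Real.mul_self_sqrt (by norm_num)
lemma sqrt3_pow2 : Real.sqrt 3 ^ 2 = 3 := Real.sq_sqrt (by norm_num)
lemma sqrt3_pow3 : Real.sqrt 3 ^ 3 = 3 * Real.sqrt 3 := by
  rw [pow_succ, sqrt3_pow2]
lemma sqrt3_pos : (0:ℝ) < Real.sqrt 3 := Real.sqrt_pos.mpr (by norm_num)

lemma cos_two : Real.cos (2 * π / 3) = -(1/2) := by
  have : (2:ℝ) * π / 3 = π - π/3 := by ring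
  rw [this, Real.cos_pi_sub, Real.cos_pi_div_three]
lemma sin_two : Real.sin (2 * π / 3) = Real.sqrt 3 / 2 := by
  have : (2:ℝ) * π / 3 = π - π/3 := by ring
  rw [this, Real.sin_pi_sub, Real.sin_pi_div_three]
lemma cos_four : Real.cos (4 * π / 3) = -(1/2) := by
  have : (4:ℝ) * π / 3 = π/3 + π := by ring
  rw [this, Real.cos_add_pi, Real.cos_pi_div_three]
lemma sin_four : Real.sin (4 * π / 3) = -(Real.sqrt 3 / 2) := by
  have : (4:ℝ) * π / 3 = π/3 + π := by ring
  rw [this, Real.sin_add_pi, Real.sin_pi_div_three]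

lemma ljq_eq : ljq₀₄ = WithLp.toLp 2 ![!₂[Real.sqrt 3 / 3, 0],
    !₂[-(Real.sqrt 3 / 6), 1/2], !₂[-(Real.sqrt 3 / 6), -(1/2)]] := by
  have h3 := sqrt3_sq
  have h0 := sqrt3_pos.ne'
  ext i j
  fin_cases i <;> fin_cases j <;>
    simp only [ljq₀₄, cos_two, sin_two, cos_four, sin_four, Matrix.cons_val_zero,
      Matrix.cons_val_one, Matrix.head_cons, Matrix.cons_val_two, Matrix.tail_cons,
      Matrix.cons_val_fin_one, Fin.isValue, PiLp.toLp_apply, Fin.zero_eta, Fin.mk_one, Fin.reduceFinMk] <;>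
    field_simp <;> nlinarith [h3]

noncomputable def u01 : E2 := !₂[Real.sqrt 3 / 2, -(1/2)]
noncomputable def u02 : E2 := !₂[Real.sqrt 3 / 2, 1/2]
noncomputable def u12 : E2 := !₂[0, 1]

lemma edge01 : ljq₀₄ 0 - ljq₀₄ 1 = u01 := by
  rw [ljq_eq]; ext j; fin_cases j <;>
    (simp [u01, PiLp.sub_apply]; try ring)
lemma edge02 : ljq₀₄ 0 - ljq₀₄ 2 = u02 := by
  rw [ljq_eq]; ext j; fin_cases j <;>
    (simp [u02, PiLp.sub_apply]; try ring)
lemma edge12 : ljq₀₄ 1 - ljq₀₄ 2 = u12 := by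
  rw [ljq_eq]; ext j; fin_cases j <;>
    (simp [u12, PiLp.sub_apply]; try ring)

lemma edge10 : ljq₀₄ 1 - ljq₀₄ 0 = -u01 := by rw [← edge01]; abel
lemma edge20 : ljq₀₄ 2 - ljq₀₄ 0 = -u02 := by rw [← edge02]; abel
lemma edge21 : ljq₀₄ 2 - ljq₀₄ 1 = -u12 := by rw [← edge12]; abel

lemma inner2 (a b c d : ℝ) : (@inner ℝ E2 _ !₂[a,b] !₂[c,d]) = a*c + b*d := by
  simp [PiLp.inner_apply, RCLike.inner_apply, Fin.sum_univ_two]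
  ring

lemma inner_u01 : ⟪u01, u01⟫ = 1 := by
  simp [u01, inner2, -inner_self_eq_norm_sq_to_K]; nlinarith [sqrt3_sq]
lemma inner_u02 : ⟪u02, u02⟫ = 1 := by
  simp [u02, inner2, -inner_self_eq_norm_sq_to_K]; nlinarith [sqrt3_sq]
lemma inner_u12 : ⟪u12, u12⟫ = 1 := by
  simp [u12, inner2, -inner_self_eq_norm_sq_to_K]

lemma norm_of_inner_one {v : E2} (h : ⟪v, v⟫ = 1) : ‖v‖ = 1 := by
  have := real_inner_self_eq_norm_sq v
  nlinarith [norm_nonneg v]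

lemma norm_u01 : ‖u01‖ = 1 := norm_of_inner_one inner_u01
lemma norm_u02 : ‖u02‖ = 1 := norm_of_inner_one inner_u02
lemma norm_u12 : ‖u12‖ = 1 := norm_of_inner_one inner_u12

lemma lj3_val : lj3 ljq₀₄ = -3 := by
  rw [lj3, edge01, edge02, edge12, norm_u01, norm_u02, norm_u12]
  norm_num

lemma u01_ne : u01 ≠ 0 := by
  intro h
  have : u01 1 = 0 := by rw [h]; rfl
  simp [u01] at this
lemma u02_ne : u02 ≠ 0 := by
  intro h
  have : u02 1 = 0 := by rw [h]; rfl
  simp [u02] at this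
lemma u12_ne : u12 ≠ 0 := by
  intro h
  have : u12 1 = 0 := by rw [h]; rfl
  simp [u12] at this

lemma q_ne01 : ljq₀₄ 0 ≠ ljq₀₄ 1 := by
  intro h; exact u01_ne (by rw [← edge01, h, sub_self])
lemma q_ne02 : ljq₀₄ 0 ≠ ljq₀₄ 2 := by
  intro h; exact u02_ne (by rw [← edge02, h, sub_self])
lemma q_ne12 : ljq₀₄ 1 ≠ ljq₀₄ 2 := by
  intro h; exact u12_ne (by rw [← edge12, h, sub_self])

lemma ljw_u01 : ljw u01 = 0 := by rw [ljw, inner_u01, ljc_one, zero_smul]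
lemma ljw_u02 : ljw u02 = 0 := by rw [ljw, inner_u02, ljc_one, zero_smul]
lemma ljw_u12 : ljw u12 = 0 := by rw [ljw, inner_u12, ljc_one, zero_smul]

lemma ljG_q₀₄ : ljG ljq₀₄ = 0 := by
  ext i
  fin_cases i <;>
    simp only [ljG, Fin.zero_eta, Fin.mk_one, Fin.isValue, Matrix.cons_val_zero,
      Matrix.cons_val_one, Matrix.head_cons, Matrix.cons_val_two, Matrix.tail_cons,
      edge01, edge02, edge12, edge10, edge20, edge21, ljw_neg, ljw_u01, ljw_u02, ljw_u12,
      neg_zero, add_zero, zero_add, PiLp.zero_apply] <;>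
    rfl

lemma gradient_lj3_q₀₄ : gradient lj3 ljq₀₄ = 0 := by
  rw [(hasGradientAt_lj3 ljq₀₄ q_ne01 q_ne02 q_ne12).gradient, ljG_q₀₄]

/-! ### The Hessian -/

noncomputable def ljR : Fin 3 → (LJConf3 →L[ℝ] E2) :=
  ![(ljDw u01).comp (ljL 0 1) + (ljDw u02).comp (ljL 0 2),
    (ljDw (-u01)).comp (ljL 1 0) + (ljDw u12).comp (ljL 1 2),
    (ljDw (-u02)).comp (ljL 2 0) + (ljDw (-u12)).comp (ljL 2 1)]

noncomputable def ljH : LJConf3 →L[ℝ] LJConf3 :=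
  (↑(PiLp.continuousLinearEquiv 2 ℝ (fun _ : Fin 3 => E2)).symm :
      (∀ _ : Fin 3, E2) →L[ℝ] LJConf3).comp (ContinuousLinearMap.pi ljR)

lemma proj_ljH (i : Fin 3) : PiLp.proj (𝕜 := ℝ) 2 (fun _ : Fin 3 => E2) i ∘L ljH = ljR i := by
  ext q; rfl

lemma hasFDerivAt_ljG : HasFDerivAt ljG ljH ljq₀₄ := by
  rw [← hasFDerivWithinAt_univ, hasFDerivWithinAt_piLp]
  intro i
  rw [hasFDerivWithinAt_univ, proj_ljH]
  fin_cases i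
  · have h1 := (hasFDerivAt_ljw (ljq₀₄ 0 - ljq₀₄ 1) (by rw [edge01]; exact u01_ne)).comp ljq₀₄
      (hasFDerivAt_sub_comp 0 1 ljq₀₄)
    have h2 := (hasFDerivAt_ljw (ljq₀₄ 0 - ljq₀₄ 2) (by rw [edge02]; exact u02_ne)).comp ljq₀₄
      (hasFDerivAt_sub_comp 0 2 ljq₀₄)
    have h := h1.add h2
    rw [edge01, edge02] at h
    convert h using 2 <;> simp [ljG, ljR, ljL]
  · have h1 := (hasFDerivAt_ljw (ljq₀₄ 1 - ljq₀₄ 0)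
      (by rw [edge10]; exact neg_ne_zero.mpr u01_ne)).comp ljq₀₄
      (hasFDerivAt_sub_comp 1 0 ljq₀₄)
    have h2 := (hasFDerivAt_ljw (ljq₀₄ 1 - ljq₀₄ 2) (by rw [edge12]; exact u12_ne)).comp ljq₀₄
      (hasFDerivAt_sub_comp 1 2 ljq₀₄)
    have h := h1.add h2
    rw [edge10, edge12] at h
    convert h using 2 <;> simp [ljG, ljR, ljL]
  · have h1 := (hasFDerivAt_ljw (ljq₀₄ 2 - ljq₀₄ 0)
      (by rw [edge20]; exact neg_ne_zero.mpr u02_ne)).comp ljq₀₄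
      (hasFDerivAt_sub_comp 2 0 ljq₀₄)
    have h2 := (hasFDerivAt_ljw (ljq₀₄ 2 - ljq₀₄ 1)
      (by rw [edge21]; exact neg_ne_zero.mpr u12_ne)).comp ljq₀₄
      (hasFDerivAt_sub_comp 2 1 ljq₀₄)
    have h := h1.add h2
    rw [edge20, edge21] at h
    convert h using 2 <;> simp [ljG, ljR, ljL]

lemma isOpen_pairs (i j : Fin 3) : IsOpen {q : LJConf3 | q i ≠ q j} := by
  have : {q : LJConf3 | q i ≠ q j} = (fun q : LJConf3 => q i - q j) ⁻¹' ({0}ᶜ) := by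
    ext q; simp [sub_eq_zero]
  rw [this]
  exact (isOpen_compl_singleton).preimage (((ljL i j).continuous).congr (fun q => rfl))

lemma grad_eventually_eq : gradient lj3 =ᶠ[nhds ljq₀₄] ljG := by
  have hmem : {q : LJConf3 | q 0 ≠ q 1 ∧ q 0 ≠ q 2 ∧ q 1 ≠ q 2} ∈ nhds ljq₀₄ := by
    refine IsOpen.mem_nhds ?_ ⟨q_ne01, q_ne02, q_ne12⟩
    have : {q : LJConf3 | q 0 ≠ q 1 ∧ q 0 ≠ q 2 ∧ q 1 ≠ q 2}
        = {q : LJConf3 | q 0 ≠ q 1} ∩ {q : LJConf3 | q 0 ≠ q 2} ∩ {q : LJConf3 | q 1 ≠ q 2} := by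
      ext q; simp [Set.mem_inter_iff, and_assoc]
    rw [this]
    exact ((isOpen_pairs 0 1).inter (isOpen_pairs 0 2)).inter (isOpen_pairs 1 2)
  filter_upwards [hmem] with q hq
  exact (hasGradientAt_lj3 q hq.1 hq.2.1 hq.2.2).gradient

set_option maxHeartbeats 8000000 in
set_option synthInstance.maxHeartbeats 1000000 in
lemma fderiv_gradient_lj3 : fderiv ℝ (gradient lj3) ljq₀₄ = ljH := by
  rw [grad_eventually_eq.fderiv_eq, hasFDerivAt_ljG.fderiv]

lemma ljHess3_eq : ljHess3 = (ljH : LJConf3 →ₗ[ℝ] LJConf3) := by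
  rw [ljHess3, fderiv_gradient_lj3]

/-! ### Eigenvectors -/

lemma ljDw_apply {u : E2} (hu : ⟪u, u⟫ = 1) (y : E2) :
    ljDw u y = (72 * ⟪u, y⟫) • u := by
  simp [ljDw, hu, ljc_one, ljc'_one, -inner_self_eq_norm_sq_to_K]
  module

lemma ljDw_neg_apply {u : E2} (hu : ⟪u, u⟫ = 1) (y : E2) :
    ljDw (-u) y = (72 * ⟪u, y⟫) • u := by
  have hu' : ⟪-u, -u⟫ = 1 := by rw [inner_neg_neg]; exact hu
  rw [ljDw_apply hu', inner_neg_left, smul_neg]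
  module

noncomputable def ljB : Fin 6 → LJConf3 :=
  ![WithLp.toLp 2 ![!₂[1,0],!₂[1,0],!₂[1,0]],
    WithLp.toLp 2 ![!₂[0,1],!₂[0,1],!₂[0,1]],
    WithLp.toLp 2 ![!₂[0,2],!₂[-Real.sqrt 3,-1],!₂[Real.sqrt 3,-1]],
    WithLp.toLp 2 ![!₂[2,0],!₂[-1,-Real.sqrt 3],!₂[-1,Real.sqrt 3]],
    WithLp.toLp 2 ![!₂[0,2],!₂[Real.sqrt 3,-1],!₂[-Real.sqrt 3,-1]],
    WithLp.toLp 2 ![!₂[2,0],!₂[-1,Real.sqrt 3],!₂[-1,-Real.sqrt 3]]]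

noncomputable def ljlam : Fin 6 → ℝ := ![0, 0, 0, 108, 108, 216]

lemma ljH_apply (x : LJConf3) (i : Fin 3) : ljH x i = ljR i x := rfl

set_option maxHeartbeats 2000000 in
lemma ljH_eigen (j : Fin 6) : ljH (ljB j) = ljlam j • ljB j := by
  fin_cases j <;>
  · ext i k
    rw [ljH_apply]
    fin_cases i <;> fin_cases k <;>
    · simp only [ljB, ljlam, ljR, Matrix.cons_val_zero, Matrix.cons_val_one,
        Matrix.head_cons, Matrix.cons_val_two, Matrix.tail_cons, Matrix.cons_val_three,
        Matrix.cons_val_four, Matrix.cons_val_succ, Matrix.cons_val_succ', Fin.mk_one,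
        Fin.zero_eta, Fin.isValue,
        ContinuousLinearMap.add_apply, ContinuousLinearMap.coe_comp', Function.comp_apply,
        ljL, ContinuousLinearMap.coe_sub', Pi.sub_apply, PiLp.proj_apply,
        ljDw_apply inner_u01, ljDw_apply inner_u02, ljDw_apply inner_u12,
        ljDw_neg_apply inner_u01, ljDw_neg_apply inner_u02, ljDw_neg_apply inner_u12]
      simp only [u01, u02, u12, PiLp.smul_apply, PiLp.add_apply, PiLp.sub_apply,
        PiLp.inner_apply, RCLike.inner_apply, conj_trivial, Fin.sum_univ_two, smul_eq_mul,
        Matrix.cons_val_zero, Matrix.cons_val_one, Matrix.head_cons, Matrix.cons_val_two,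
        Matrix.tail_cons, Matrix.cons_val_succ, Matrix.cons_val_succ',
        Fin.mk_one, Fin.zero_eta, Fin.isValue]
      ring_nf
      try simp only [sqrt3_pow2, sqrt3_pow3]
      try ring_nf
      try norm_num

set_option maxHeartbeats 1000000 in
lemma ljB_ortho : ∀ i j, i ≠ j → ⟪ljB i, ljB j⟫ = 0 := by
  intro i j hij
  fin_cases i <;> fin_cases j <;> (try (exact absurd rfl hij)) <;>
  · simp only [ljB, PiLp.inner_apply, RCLike.inner_apply, conj_trivial,
      Fin.sum_univ_three, Fin.sum_univ_two, Matrix.cons_val_zero, Matrix.cons_val_one,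
      Matrix.head_cons, Matrix.cons_val_two, Matrix.tail_cons, Matrix.cons_val_three,
      Matrix.cons_val_four, Matrix.cons_val_succ, Matrix.cons_val_succ',
      Fin.mk_one, Fin.zero_eta, Fin.isValue]
    ring_nf
    try simp only [sqrt3_pow2, sqrt3_pow3]
    try ring_nf
    try norm_num

set_option maxHeartbeats 1000000 in
lemma ljB_ne (i : Fin 6) : ljB i ≠ 0 := by
  intro h
  have h0 : ljB i 0 0 = 0 := by rw [h]; rfl
  have h1 : ljB i 0 1 = 0 := by rw [h]; rfl
  fin_cases i <;>
    simp only [ljB, Matrix.cons_val_zero, Matrix.cons_val_one, Matrix.head_cons,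
      Matrix.cons_val_two, Matrix.tail_cons, Matrix.cons_val_three, Matrix.cons_val_four,
      Matrix.cons_val_succ, Matrix.cons_val_succ', Fin.mk_one, Fin.zero_eta,
      Fin.isValue] at h0 h1 <;>
    norm_num at *

lemma ljB_li : LinearIndependent ℝ ljB :=
  linearIndependent_of_ne_zero_of_inner_eq_zero ljB_ne ljB_ortho

lemma finrank_conf : Module.finrank ℝ LJConf3 = 6 := by
  rw [(WithLp.linearEquiv 2 ℝ (∀ _ : Fin 3, E2)).finrank_eq]
  simp [Module.finrank_pi_fintype, finrank_euclideanSpace_fin]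

noncomputable def ljbasis : Module.Basis (Fin 6) ℝ LJConf3 :=
  basisOfLinearIndependentOfCardEqFinrank ljB_li (by simp [finrank_conf])

lemma ljbasis_apply (i : Fin 6) : ljbasis i = ljB i := by
  rw [ljbasis, coe_basisOfLinearIndependentOfCardEqFinrank]

lemma toMatrix_ljHess3 :
    LinearMap.toMatrix ljbasis ljbasis ljHess3 = Matrix.diagonal ljlam := by
  apply Matrix.ext
  intro i j
  rw [LinearMap.toMatrix_apply, ljbasis_apply, ljHess3_eq]
  have : (ljH : LJConf3 →ₗ[ℝ] LJConf3) (ljB j) = ljlam j • ljB j := ljH_eigen j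
  rw [this, ← ljbasis_apply, map_smul, Module.Basis.repr_self, Finsupp.smul_apply,
    Finsupp.single_apply, Matrix.diagonal_apply]
  by_cases h : j = i
  · subst h; simp
  · simp [h, Ne.symm h]

lemma charpoly_ljHess3 :
    LinearMap.charpoly ljHess3 = X ^ 3 * (X - C 108) ^ 2 * (X - C 216) := by
  rw [← LinearMap.charpoly_toMatrix ljHess3 ljbasis, toMatrix_ljHess3]
  rw [Matrix.charpoly]
  have hc : Matrix.charmatrix (Matrix.diagonal ljlam)
      = Matrix.diagonal (fun i => (X : ℝ[X]) - C (ljlam i)) := by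
    apply Matrix.ext
    intro i j
    by_cases h : i = j
    · subst h; rw [Matrix.charmatrix_apply_eq]; simp
    · rw [Matrix.charmatrix_apply_ne _ _ _ h, Matrix.diagonal_apply_ne _ h,
        Matrix.diagonal_apply_ne _ h, map_zero, neg_zero]
  have l0 : ljlam 0 = 0 := rfl
  have l1 : ljlam 1 = 0 := rfl
  have l2 : ljlam 2 = 0 := rfl
  have l3 : ljlam 3 = 108 := rfl
  have l4 : ljlam 4 = 108 := rfl
  have l5 : ljlam 5 = 216 := rfl
  rw [hc, Matrix.det_diagonal, Fin.prod_univ_six, l0, l1, l2, l3, l4, l5]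
  simp only [map_zero, sub_zero]
  ring

lemma hasEigen (j : Fin 6) : Module.End.HasEigenvalue ljHess3 (ljlam j) := by
  apply Module.End.hasEigenvalue_of_hasEigenvector (x := ljB j)
  refine ⟨Module.End.mem_eigenspace_iff.mpr ?_, ljB_ne j⟩
  rw [ljHess3_eq]
  exact ljH_eigen j

lemma spectrum_ljHess3 : spectrum ℝ ljHess3 = {0, 108, 216} := by
  ext μ
  rw [← Module.End.hasEigenvalue_iff_mem_spectrum]
  constructor
  · intro h
    have hroot : (minpoly ℝ ljHess3).IsRoot μ := Module.End.hasEigenvalue_iff_isRoot.mp h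
    obtain ⟨r, hr⟩ := LinearMap.minpoly_dvd_charpoly ljHess3
    have hcr : (LinearMap.charpoly ljHess3).IsRoot μ := by
      rw [hr, Polynomial.IsRoot, Polynomial.eval_mul, hroot.eq_zero, zero_mul]
    rw [charpoly_ljHess3] at hcr
    have := hcr
    simp only [Polynomial.IsRoot, Polynomial.eval_mul, Polynomial.eval_pow,
      Polynomial.eval_sub, Polynomial.eval_X, Polynomial.eval_C] at this
    rcases mul_eq_zero.mp this with h' | h'
    · rcases mul_eq_zero.mp h' with h'' | h''
      · have : μ = 0 := by
          have := pow_eq_zero_iff (n := 3) (by norm_num) |>.mp h''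
          exact this
        simp [this]
      · have : μ = 108 := by
          have := pow_eq_zero_iff (n := 2) (by norm_num) |>.mp h''
          linarith [sub_eq_zero.mp this]
        simp [this]
    · have : μ = 216 := by linarith [sub_eq_zero.mp h']
      simp [this]
  · intro h
    simp only [Set.mem_insert_iff, Set.mem_singleton_iff] at h
    rcases h with rfl | rfl | rfl
    · exact hasEigen 0
    · exact hasEigen 3
    · exact hasEigen 5

lemma cp_ne1 : ((X : ℝ[X]) ^ 3) ≠ 0 := pow_ne_zero _ X_ne_zero
lemma cp_ne2 : (((X : ℝ[X]) - C 108) ^ 2) ≠ 0 := pow_ne_zero _ (X_sub_C_ne_zero 108)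
lemma cp_ne3 : ((X : ℝ[X]) - C 216) ≠ 0 := X_sub_C_ne_zero 216

lemma rm_split (a : ℝ) :
    ((X : ℝ[X]) ^ 3 * (X - C 108) ^ 2 * (X - C 216)).rootMultiplicity a
      = ((X : ℝ[X]) ^ 3).rootMultiplicity a + (((X : ℝ[X]) - C 108) ^ 2).rootMultiplicity a
        + ((X : ℝ[X]) - C 216).rootMultiplicity a := by
  rw [Polynomial.rootMultiplicity_mul
      (mul_ne_zero (mul_ne_zero cp_ne1 cp_ne2) cp_ne3),
    Polynomial.rootMultiplicity_mul (mul_ne_zero cp_ne1 cp_ne2)]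

lemma rm_X_pow (a : ℝ) (n : ℕ) : ((X : ℝ[X]) ^ n).rootMultiplicity a
    = (((X : ℝ[X]) - C 0) ^ n).rootMultiplicity a := by
  norm_num

lemma mult0 : ((X : ℝ[X]) ^ 3 * (X - C 108) ^ 2 * (X - C 216)).rootMultiplicity 0 = 3 := by
  rw [rm_split, rm_X_pow, Polynomial.rootMultiplicity_X_sub_C_pow,
    Polynomial.rootMultiplicity_eq_zero (by norm_num [Polynomial.IsRoot]),
    Polynomial.rootMultiplicity_eq_zero (by norm_num [Polynomial.IsRoot])]

lemma mult108 : ((X : ℝ[X]) ^ 3 * (X - C 108) ^ 2 * (X - C 216)).rootMultiplicity 108 = 2 := by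
  rw [rm_split, rm_X_pow, Polynomial.rootMultiplicity_X_sub_C_pow,
    Polynomial.rootMultiplicity_eq_zero (by norm_num [Polynomial.IsRoot]),
    Polynomial.rootMultiplicity_eq_zero (by norm_num [Polynomial.IsRoot])]

lemma mult216 : ((X : ℝ[X]) ^ 3 * (X - C 108) ^ 2 * (X - C 216)).rootMultiplicity 216 = 1 := by
  rw [rm_split, rm_X_pow,
    Polynomial.rootMultiplicity_eq_zero (by norm_num [Polynomial.IsRoot]),
    Polynomial.rootMultiplicity_eq_zero (by norm_num [Polynomial.IsRoot]),
    Polynomial.rootMultiplicity_X_sub_C_self]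

/-- **The equilateral Lagrange configuration of the Lennard-Jones 3-body problem.**
`∇U(q₀₄) = 0`, `U(q₀₄) = −3`, and the Hessian `∇²U(q₀₄)` has spectrum `{0, 108, 216}` with
multiplicities `3`, `2`, `1`; equivalently its characteristic polynomial is
`x³(x − 108)²(x − 216)`. -/
theorem lennard_jones_three_body_lagrange_configuration :
    gradient lj3 ljq₀₄ = 0 ∧
    lj3 ljq₀₄ = -3 ∧
    spectrum ℝ ljHess3 = {0, 108, 216} ∧
    LinearMap.charpoly ljHess3 = X ^ 3 * (X - C 108) ^ 2 * (X - C 216) ∧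
    (LinearMap.charpoly ljHess3).rootMultiplicity 0 = 3 ∧
    (LinearMap.charpoly ljHess3).rootMultiplicity 108 = 2 ∧
    (LinearMap.charpoly ljHess3).rootMultiplicity 216 = 1 := by
  refine ⟨gradient_lj3_q₀₄, lj3_val, spectrum_ljHess3, charpoly_ljHess3, ?_, ?_, ?_⟩ <;>
    rw [charpoly_ljHess3]
  · exact mult0
  · exact mult108
  · exact mult216
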